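/- For any trie T with n edges, the number of distinct palindromic substrings of T, including the empty string, is at most n + 1, i.e., |DPal(T)| ≤ n + 1. -/
import Mathlib


/-- A trie over alphabet `α`: a finite rooted tree with a parent function,
every node reaches the root by iterating `par`, each non-root node carries the
label of the edge to its parent, and distinct children of a node have
distinct labels. -/
structure Trie (α : Type*) where
  V : Type
  fV : Fintype V
  dV : DecidableEq V
  root : V
  par : V → V
  lab : V → α
  par_root : par root = root
  reaches_root : ∀ v : V, ∃ k : ℕ, par^[k] v = root
  distinct_labels : ∀ u v : V, u ≠ root → v ≠ root →
    par u = par v → lab u = lab v → u = v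

attribute [instance] Trie.fV Trie.dV

namespace Trie

variable {α : Type*}

/-- The depth of a node: its distance to the root. -/
noncomputable def depth (T : Trie α) (v : T.V) : ℕ :=
  Nat.find (T.reaches_root v)

/-- `pref T u k` is the string of the `k` edge labels on the path from `u`
towards the root (read upward). -/
def pref (T : Trie α) : T.V → ℕ → List α
  | _, 0 => []
  | u, k + 1 => T.lab u :: T.pref (T.par u) k

/-- The set of (reversed) substrings of the trie `T`, i.e. all labels of
upward paths, including the empty string. -/
noncomputable def Substr (T : Trie α) : Set (List α) :=
  { w | ∃ (u : T.V) (k : ℕ), k ≤ T.depth u ∧ T.pref u k = w }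

/-- The set of distinct palindromes in the trie `T`. -/
noncomputable def DPal (T : Trie α) : Set (List α) :=
  { w ∈ T.Substr | w = w.reverse }

end Trie

namespace Trie

variable {α : Type*} (T : Trie α)

theorem pref_length (k : ℕ) : ∀ (u : T.V), (T.pref u k).length = k := by
  induction k with
  | zero => intro u; rfl
  | succ k ih => intro u; simp [pref, ih]

theorem depth_root : T.depth T.root = 0 := by
  simpa [depth, Nat.find_eq_zero] using rfl

theorem iterate_depth (u : T.V) : T.par^[T.depth u] u = T.root :=
  Nat.find_spec (T.reaches_root u)

theorem depth_par (u : T.V) (h : 0 < T.depth u) :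
    T.depth (T.par u) = T.depth u - 1 := by
  have h1 : T.depth (T.par u) ≤ T.depth u - 1 := by
    apply Nat.find_min'
    have := T.iterate_depth u
    rwa [show T.depth u = (T.depth u - 1) + 1 by omega,
      Function.iterate_succ_apply] at this
  have h2 : T.depth u ≤ T.depth (T.par u) + 1 := by
    apply Nat.find_min'
    rw [Function.iterate_succ_apply]
    exact T.iterate_depth (T.par u)
  omega

theorem depth_iterate (u : T.V) : ∀ j, j ≤ T.depth u →
    T.depth (T.par^[j] u) = T.depth u - j := by
  intro j
  induction j with
  | zero => intro _; rfl
  | succ j ih =>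
    intro h
    rw [Function.iterate_succ_apply']
    have hj := ih (by omega)
    rw [T.depth_par _ (by rw [hj]; omega), hj]; omega

theorem pref_take (u : T.V) : ∀ k j, j ≤ k →
    (T.pref u k).take j = T.pref u j := by
  intro k
  induction k generalizing u with
  | zero => intro j hj; interval_cases j; rfl
  | succ k ih =>
    intro j hj
    match j with
    | 0 => rfl
    | j'+1 => simp [pref, ih (T.par u) j' (by omega)]

theorem pref_drop (u : T.V) : ∀ j k, j ≤ k →
    (T.pref u k).drop j = T.pref (T.par^[j] u) (k - j) := by
  intro j
  induction j generalizing u with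
  | zero => intro k hk; simp
  | succ j ih =>
    intro k hk
    match k with
    | k'+1 =>
      rw [Function.iterate_succ_apply]
      show (T.pref (T.par u) k').drop j = _
      rw [ih (T.par u) k' (by omega)]
      congr 1
      omega

/-- A palindromic prefix of a palindrome is also a suffix. -/
theorem pal_prefix_drop {w v : List α} (hp : w <+: v) (hw : w = w.reverse)
    (hv : v = v.reverse) : v.drop (v.length - w.length) = w := by
  have hs : w <:+ v := by
    rw [← List.reverse_prefix, ← hw, ← hv]
    exact hp
  obtain ⟨t, rfl⟩ := hs
  simp

open Classical in
/-- The length of the longest palindromic upward path from `u`. -/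
noncomputable def mlen (u : T.V) : ℕ :=
  Nat.findGreatest (fun k => T.pref u k = (T.pref u k).reverse) (T.depth u)

theorem mlen_le (u : T.V) : T.mlen u ≤ T.depth u := by
  classical exact Nat.findGreatest_le _

theorem mlen_pal (u : T.V) :
    T.pref u (T.mlen u) = (T.pref u (T.mlen u)).reverse := by
  classical
  exact Nat.findGreatest_spec (P := fun k => T.pref u k = (T.pref u k).reverse)
    (Nat.zero_le _) rfl

theorem le_mlen (u : T.V) (k : ℕ) (hk : k ≤ T.depth u)
    (hp : T.pref u k = (T.pref u k).reverse) : k ≤ T.mlen u := by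
  classical exact Nat.le_findGreatest hk hp

/-- The longest palindrome read upward from `u`. -/
noncomputable def gpal (u : T.V) : List α := T.pref u (T.mlen u)

theorem mem_range_gpal (w : List α) (hpal : w = w.reverse) :
    ∀ (d : ℕ) (u : T.V), T.depth u = d → w.length ≤ T.depth u →
      T.pref u w.length = w → w ∈ Set.range T.gpal := by
  intro d
  induction d using Nat.strong_induction_on with
  | _ d ih =>
    intro u hd hlen hpref
    have hm : w.length ≤ T.mlen u := T.le_mlen u w.length hlen (by rw [hpref, ← hpal])
    rcases eq_or_lt_of_le hm with heq | hlt
    · exact ⟨u, by rw [gpal, ← heq, hpref]⟩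
    · -- w is a proper prefix of the longer palindrome v = pref u (mlen u)
      set v := T.pref u (T.mlen u) with hv
      have hvlen : v.length = T.mlen u := T.pref_length _ u
      have hpre : w <+: v := by
        rw [← hpref, ← T.pref_take u (T.mlen u) w.length (le_of_lt hlt)]
        exact List.take_prefix _ _
      have hdrop := pal_prefix_drop hpre hpal (T.mlen_pal u)
      rw [hvlen] at hdrop
      set j := T.mlen u - w.length with hj
      have hjpos : 0 < j := by omega
      have hjle : j ≤ T.depth u := le_trans (by omega) (T.mlen_le u)
      have hdrop' : T.pref (T.par^[j] u) w.length = w := by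
        have := T.pref_drop u j (T.mlen u) (by omega)
        rw [← hv] at this
        rw [show T.mlen u - j = w.length by omega] at this
        rw [← this, hdrop]
      have hdu : T.depth (T.par^[j] u) = T.depth u - j := T.depth_iterate u j hjle
      have hlt' : T.depth (T.par^[j] u) < d := by omega
      exact ih _ hlt' (T.par^[j] u) rfl
        (by rw [hdu]; have := T.mlen_le u; omega) hdrop'

theorem dpal_subset_range : T.DPal ⊆ Set.range T.gpal := by
  rintro w ⟨⟨u, k, hk, hpref⟩, hpal⟩
  have hklen : k = w.length := by rw [← hpref, T.pref_length]
  subst hklen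
  exact T.mem_range_gpal w hpal (T.depth u) u rfl hk hpref

end Trie

/-- For any trie with `n` edges, the number of distinct palindromic substrings
(including the empty string) is at most `n + 1`. -/
theorem dpal_count {α : Type*} (T : Trie α) (n : ℕ)
    (hn : n = Fintype.card T.V - 1) :
    (T.DPal).Finite ∧ (T.DPal).ncard ≤ n + 1 := by
  have hsub := T.dpal_subset_range
  have hfin : (Set.range T.gpal).Finite := Set.finite_range _
  have hcardV : 1 ≤ Fintype.card T.V := Fintype.card_pos_iff.mpr ⟨T.root⟩
  refine ⟨hfin.subset hsub, ?_⟩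
  calc (T.DPal).ncard ≤ (Set.range T.gpal).ncard := Set.ncard_le_ncard hsub hfin
    _ ≤ Fintype.card T.V := by
        rw [← Set.image_univ]
        calc (T.gpal '' Set.univ).ncard ≤ (Set.univ : Set T.V).ncard :=
              Set.ncard_image_le Set.finite_univ
          _ = Fintype.card T.V := by rw [Set.ncard_univ, Nat.card_eq_fintype_card]
    _ ≤ n + 1 := by omega
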